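/- Let S be a finite set with 0 ∈ S, 0 < v_i'' ≤ v_i for all i ∈ S. Then Σ_{i∈S} | v_i''/(Σ_{j∈S} v_j'') − v_i/(Σ_{j∈S} v_j) | ≤ 2·(Σ_{i∈S} (v_i − v_i'')) / (Σ_{i∈S} v_i''). -/

import Mathlib

open Finset

/-- Total-variation-style bound: for a finite set `S` containing `0` and positive weights
`v'' i ≤ v i`,
`∑_{i ∈ S} |v'' i / ∑ v'' - v i / ∑ v| ≤ 2 * (∑_{i ∈ S} (v i - v'' i)) / (∑_{i ∈ S} v'' i)`. -/
theorem tv_bound_of_le (S : Finset ℕ) (h0 : 0 ∈ S) (v v'' : ℕ → ℝ)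
    (hv'' : ∀ i ∈ S, 0 < v'' i) (hle : ∀ i ∈ S, v'' i ≤ v i) :
    ∑ i ∈ S, |v'' i / (∑ j ∈ S, v'' j) - v i / (∑ j ∈ S, v j)| ≤
      2 * (∑ i ∈ S, (v i - v'' i)) / (∑ i ∈ S, v'' i) := by
  set A := ∑ j ∈ S, v'' j with hAdef
  set B := ∑ j ∈ S, v j with hBdef
  have hA : 0 < A := Finset.sum_pos hv'' ⟨0, h0⟩
  have hAB : A ≤ B := Finset.sum_le_sum hle
  have hB : 0 < B := lt_of_lt_of_le hA hAB
  have hD : B - A = ∑ i ∈ S, (v i - v'' i) := by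
    rw [Finset.sum_sub_distrib]
  set D := B - A with hDdef
  have hDnn : 0 ≤ D := sub_nonneg.mpr hAB
  have key : ∀ i ∈ S, |v'' i / A - v i / B| ≤ (v'' i * D + A * (v i - v'' i)) / (A * B) := by
    intro i hi
    have h1 : v'' i / A - v i / B = (v'' i * B - v i * A) / (A * B) := by
      field_simp
    rw [h1, abs_div, abs_of_pos (mul_pos hA hB)]
    gcongr
    have h2 : v'' i * B - v i * A = v'' i * D - A * (v i - v'' i) := by
      simp only [hDdef]; ring
    rw [h2]
    have ha : 0 ≤ v'' i * D := mul_nonneg (hv'' i hi).le hDnn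
    have hb : 0 ≤ A * (v i - v'' i) := mul_nonneg hA.le (sub_nonneg.mpr (hle i hi))
    calc |v'' i * D - A * (v i - v'' i)| ≤ |v'' i * D| + |A * (v i - v'' i)| := abs_sub _ _
      _ = v'' i * D + A * (v i - v'' i) := by rw [abs_of_nonneg ha, abs_of_nonneg hb]
  calc ∑ i ∈ S, |v'' i / A - v i / B|
      ≤ ∑ i ∈ S, (v'' i * D + A * (v i - v'' i)) / (A * B) := Finset.sum_le_sum key
    _ = (∑ i ∈ S, (v'' i * D + A * (v i - v'' i))) / (A * B) := by
        rw [Finset.sum_div]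
    _ = (A * D + A * D) / (A * B) := by
        rw [Finset.sum_add_distrib, ← Finset.sum_mul, ← Finset.mul_sum, ← hAdef, ← hD]
    _ = 2 * D / B := by field_simp; ring
    _ ≤ 2 * D / A := by
        apply div_le_div_of_nonneg_left (by linarith) hA hAB
    _ = 2 * (∑ i ∈ S, (v i - v'' i)) / A := by rw [← hD]
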